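/- For every t ∈ ℂ, the matrix exponential satisfies exp(t L₀) = e^{t ρ₋} Π₋ + e^{t ρ₊} Π₊. -/

import Mathlib

open Matrix Complex

noncomputable section

/-- Pauli matrix σ₁. -/
def sigma1 : Matrix (Fin 2) (Fin 2) ℂ := !![0, 1; 1, 0]

/-- Pauli matrix σ₂. -/
def sigma2 : Matrix (Fin 2) (Fin 2) ℂ := !![0, -Complex.I; Complex.I, 0]

/-- Pauli matrix σ₃. -/
def sigma3 : Matrix (Fin 2) (Fin 2) ℂ := !![1, 0; 0, -1]

/-- The Dirac matrices α₁, α₂, α₃ in 2×2-block form `[[0, σⱼ],[σⱼ, 0]]`. -/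
def diracAlpha : Fin 3 → Matrix (Fin 4) (Fin 4) ℂ :=
  ![Matrix.reindex finSumFinEquiv finSumFinEquiv (Matrix.fromBlocks 0 sigma1 sigma1 0),
    Matrix.reindex finSumFinEquiv finSumFinEquiv (Matrix.fromBlocks 0 sigma2 sigma2 0),
    Matrix.reindex finSumFinEquiv finSumFinEquiv (Matrix.fromBlocks 0 sigma3 sigma3 0)]

/-- The Dirac matrix β = `[[I₂, 0],[0, −I₂]]`. -/
def diracBeta : Matrix (Fin 4) (Fin 4) ℂ :=
  Matrix.reindex finSumFinEquiv finSumFinEquiv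
    (Matrix.fromBlocks (1 : Matrix (Fin 2) (Fin 2) ℂ) 0 0 (-1 : Matrix (Fin 2) (Fin 2) ℂ))

/-- α·x = x₁α₁ + x₂α₂ + x₃α₃. -/
def alphaDot (x : Fin 3 → ℝ) : Matrix (Fin 4) (Fin 4) ℂ :=
  (x 0 : ℂ) • diracAlpha 0 + (x 1 : ℂ) • diracAlpha 1 + (x 2 : ℂ) • diracAlpha 2

/-- Euclidean inner product on ℝ³. -/
def inner3 (X Y : Fin 3 → ℝ) : ℝ := X 0 * Y 0 + X 1 * Y 1 + X 2 * Y 2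

/-- Euclidean norm on ℝ³. -/
def norm3 (X : Fin 3 → ℝ) : ℝ := Real.sqrt (inner3 X X)

/-- Cross product on ℝ³. -/
def cross3 (X Y : Fin 3 → ℝ) : Fin 3 → ℝ :=
  ![X 1 * Y 2 - X 2 * Y 1, X 2 * Y 0 - X 0 * Y 2, X 0 * Y 1 - X 1 * Y 0]

/-- γ₅ := −i α₁α₂α₃. -/
def gamma5 : Matrix (Fin 4) (Fin 4) ℂ :=
  (-Complex.I) • (diracAlpha 0 * diracAlpha 1 * diracAlpha 2)

/-- S·X := −γ₅ (α·X). -/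
def sDot (X : Fin 3 → ℝ) : Matrix (Fin 4) (Fin 4) ℂ := -(gamma5 * alphaDot X)

/-- P₊ := (I₄ − iβ(α·ν))/2. -/
def Pplus (ν : Fin 3 → ℝ) : Matrix (Fin 4) (Fin 4) ℂ :=
  ((1 : ℂ) / 2) • (1 - Complex.I • (diracBeta * alphaDot ν))

/-- P₋ := (I₄ + iβ(α·ν))/2. -/
def Pminus (ν : Fin 3 → ℝ) : Matrix (Fin 4) (Fin 4) ℂ :=
  ((1 : ℂ) / 2) • (1 + Complex.I • (diracBeta * alphaDot ν))

/-- λ := √(|ν × ξ|² + 1). -/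
def lam (ν ξ : Fin 3 → ℝ) : ℝ :=
  Real.sqrt (inner3 (cross3 ν ξ) (cross3 ν ξ) + 1)

/-- Π₊ := (1/2)(I₄ + λ⁻¹(S·τ − iβ(α·ν))), τ = ν × ξ. -/
def Piplus (ν ξ : Fin 3 → ℝ) : Matrix (Fin 4) (Fin 4) ℂ :=
  ((1 : ℂ) / 2) •
    (1 + ((lam ν ξ : ℂ))⁻¹ • (sDot (cross3 ν ξ) - Complex.I • (diracBeta * alphaDot ν)))

/-- Π₋ := (1/2)(I₄ − λ⁻¹(S·τ − iβ(α·ν))), τ = ν × ξ. -/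
def Piminus (ν ξ : Fin 3 → ℝ) : Matrix (Fin 4) (Fin 4) ℂ :=
  ((1 : ℂ) / 2) •
    (1 - ((lam ν ξ : ℂ))⁻¹ • (sDot (cross3 ν ξ) - Complex.I • (diracBeta * alphaDot ν)))

/-- ρ₊ := (i⟨ν,ξ⟩ + λ)/s. -/
def rhoP (ν ξ : Fin 3 → ℝ) (s : ℝ) : ℂ :=
  (Complex.I * (inner3 ν ξ : ℂ) + (lam ν ξ : ℂ)) / (s : ℂ)

/-- ρ₋ := (i⟨ν,ξ⟩ − λ)/s. -/
def rhoM (ν ξ : Fin 3 → ℝ) (s : ℝ) : ℂ :=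
  (Complex.I * (inner3 ν ξ : ℂ) - (lam ν ξ : ℂ)) / (s : ℂ)

/-- L₀ := s⁻¹ (iα·ν)(α·ξ + β). -/
def L0 (ν ξ : Fin 3 → ℝ) (s : ℝ) : Matrix (Fin 4) (Fin 4) ℂ :=
  ((s : ℂ))⁻¹ • ((Complex.I • alphaDot ν) * (alphaDot ξ + diracBeta))

/-- k₊ := (1 + λ⁻¹)/2. -/
def kPlus (ν ξ : Fin 3 → ℝ) : ℝ := (1 + (lam ν ξ)⁻¹) / 2

/-- k₋ := (1 − λ⁻¹)/2. -/
def kMinus (ν ξ : Fin 3 → ℝ) : ℝ := (1 - (lam ν ξ)⁻¹) / 2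

/-- Θ := (2λ)⁻¹ S·τ, τ = ν × ξ. -/
def theta (ν ξ : Fin 3 → ℝ) : Matrix (Fin 4) (Fin 4) ℂ :=
  ((2 * lam ν ξ : ℝ) : ℂ)⁻¹ • sDot (cross3 ν ξ)

/-- The fundamental solution φ_{m,z,w} of the free Dirac operator. -/
def phiFS (m : ℝ) (z w : ℂ) (x : Fin 3 → ℝ) : Matrix (Fin 4) (Fin 4) ℂ :=
  (Complex.exp (Complex.I * w * (norm3 x : ℂ)) / (4 * (Real.pi : ℂ) * (norm3 x : ℂ))) •
    (z • (1 : Matrix (Fin 4) (Fin 4) ℂ) + (m : ℂ) • diracBeta +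
      ((1 - Complex.I * w * (norm3 x : ℂ)) * Complex.I / ((norm3 x : ℂ) ^ 2)) • alphaDot x)


-- ===== auxiliary lemmas =====

lemma finsum0 : (finSumFinEquiv.symm (0 : Fin 4) : Fin 2 ⊕ Fin 2) = Sum.inl 0 := rfl
lemma finsum1 : (finSumFinEquiv.symm (1 : Fin 4) : Fin 2 ⊕ Fin 2) = Sum.inl 1 := rfl
lemma finsum2 : (finSumFinEquiv.symm (2 : Fin 4) : Fin 2 ⊕ Fin 2) = Sum.inr 0 := rfl
lemma finsum3 : (finSumFinEquiv.symm (3 : Fin 4) : Fin 2 ⊕ Fin 2) = Sum.inr 1 := rfl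

lemma alpha0_eq : diracAlpha 0 = !![0,0,0,1; 0,0,1,0; 0,1,0,0; 1,0,0,0] := by
  ext i j; fin_cases i <;> fin_cases j <;>
    simp [diracAlpha, sigma1, finsum0, finsum1, finsum2, finsum3,
      Matrix.one_apply, Matrix.vecHead, Matrix.vecTail]

lemma alpha1_eq : diracAlpha 1 =
    !![0,0,0,-Complex.I; 0,0,Complex.I,0; 0,-Complex.I,0,0; Complex.I,0,0,0] := by
  ext i j; fin_cases i <;> fin_cases j <;>
    simp [diracAlpha, sigma2, finsum0, finsum1, finsum2, finsum3,
      Matrix.one_apply, Matrix.vecHead, Matrix.vecTail]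

lemma alpha2_eq : diracAlpha 2 = !![0,0,1,0; 0,0,0,-1; 1,0,0,0; 0,-1,0,0] := by
  ext i j; fin_cases i <;> fin_cases j <;>
    simp [diracAlpha, sigma3, finsum0, finsum1, finsum2, finsum3,
      Matrix.one_apply, Matrix.vecHead, Matrix.vecTail]

lemma beta_eq : diracBeta = !![1,0,0,0; 0,1,0,0; 0,0,-1,0; 0,0,0,-1] := by
  ext i j; fin_cases i <;> fin_cases j <;>
    simp [diracBeta, finsum0, finsum1, finsum2, finsum3,
      Matrix.one_apply, Matrix.vecHead, Matrix.vecTail]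

lemma alphaDot_eq (x : Fin 3 → ℝ) : alphaDot x =
    !![0, 0, (x 2 : ℂ), (x 0 : ℂ) - Complex.I * (x 1 : ℂ);
       0, 0, (x 0 : ℂ) + Complex.I * (x 1 : ℂ), -(x 2 : ℂ);
       (x 2 : ℂ), (x 0 : ℂ) - Complex.I * (x 1 : ℂ), 0, 0;
       (x 0 : ℂ) + Complex.I * (x 1 : ℂ), -(x 2 : ℂ), 0, 0] := by
  rw [alphaDot, alpha0_eq, alpha1_eq, alpha2_eq]
  ext i j; fin_cases i <;> fin_cases j <;>
    simp [Matrix.vecHead, Matrix.vecTail] <;> try ring_nf <;> try simp [Complex.I_sq] <;> try ring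

lemma gamma5_eq : gamma5 = !![0,0,1,0; 0,0,0,1; 1,0,0,0; 0,1,0,0] := by
  rw [gamma5, alpha0_eq, alpha1_eq, alpha2_eq]
  ext i j; fin_cases i <;> fin_cases j <;>
    simp [Matrix.mul_apply, Fin.sum_univ_four, Matrix.vecHead, Matrix.vecTail, Complex.I_mul_I,
      Matrix.vecHead, Matrix.vecTail]

lemma sDot_eq (x : Fin 3 → ℝ) : sDot x =
    !![-(x 2 : ℂ), -(x 0 : ℂ) + Complex.I * (x 1 : ℂ), 0, 0;
       -(x 0 : ℂ) - Complex.I * (x 1 : ℂ), (x 2 : ℂ), 0, 0;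
       0, 0, -(x 2 : ℂ), -(x 0 : ℂ) + Complex.I * (x 1 : ℂ);
       0, 0, -(x 0 : ℂ) - Complex.I * (x 1 : ℂ), (x 2 : ℂ)] := by
  rw [sDot, gamma5_eq, alphaDot_eq]
  ext i j; fin_cases i <;> fin_cases j <;>
    simp [Matrix.mul_apply, Fin.sum_univ_four, Matrix.vecHead, Matrix.vecTail] <;> try ring_nf <;> try simp [Complex.I_sq] <;> try ring

lemma BA_eq (x : Fin 3 → ℝ) : diracBeta * alphaDot x =
    !![0, 0, (x 2 : ℂ), (x 0 : ℂ) - Complex.I * (x 1 : ℂ);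
       0, 0, (x 0 : ℂ) + Complex.I * (x 1 : ℂ), -(x 2 : ℂ);
       -(x 2 : ℂ), -((x 0 : ℂ) - Complex.I * (x 1 : ℂ)), 0, 0;
       -((x 0 : ℂ) + Complex.I * (x 1 : ℂ)), (x 2 : ℂ), 0, 0] := by
  rw [beta_eq, alphaDot_eq]
  ext i j; fin_cases i <;> fin_cases j <;>
    simp [Matrix.mul_apply, Fin.sum_univ_four, Matrix.vecHead, Matrix.vecTail] <;> try ring_nf <;> try simp [Complex.I_sq] <;> try ring

lemma alpha_mul_alpha (x y : Fin 3 → ℝ) :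
    alphaDot x * alphaDot y =
      ((inner3 x y : ℝ) : ℂ) • 1 - Complex.I • sDot (cross3 x y) := by
  rw [alphaDot_eq, alphaDot_eq, sDot_eq]
  ext i j; fin_cases i <;> fin_cases j <;>
    simp [Matrix.mul_apply, Fin.sum_univ_four, Matrix.vecHead, Matrix.vecTail, Matrix.one_apply, inner3, cross3] <;>
    try push_cast <;> try ring_nf <;> try simp [Complex.I_sq] <;> try ring

lemma alpha_mul_self (x : Fin 3 → ℝ) :
    alphaDot x * alphaDot x = ((inner3 x x : ℝ) : ℂ) • 1 := by
  rw [alphaDot_eq]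
  ext i j; fin_cases i <;> fin_cases j <;>
    simp [Matrix.mul_apply, Fin.sum_univ_four, Matrix.vecHead, Matrix.vecTail, Matrix.one_apply, inner3] <;>
    try push_cast <;> try ring_nf <;> try simp [Complex.I_sq] <;> try ring

lemma sDot_mul_self (x : Fin 3 → ℝ) :
    sDot x * sDot x = ((inner3 x x : ℝ) : ℂ) • 1 := by
  rw [sDot_eq]
  ext i j; fin_cases i <;> fin_cases j <;>
    simp [Matrix.mul_apply, Fin.sum_univ_four, Matrix.vecHead, Matrix.vecTail, Matrix.one_apply, inner3] <;>
    try push_cast <;> try ring_nf <;> try simp [Complex.I_sq] <;> try ring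

lemma beta_mul_beta : diracBeta * diracBeta = 1 := by
  rw [beta_eq]
  ext i j; fin_cases i <;> fin_cases j <;>
    simp [Matrix.mul_apply, Fin.sum_univ_four, Matrix.vecHead, Matrix.vecTail, Matrix.one_apply]

lemma alpha_mul_beta (x : Fin 3 → ℝ) :
    alphaDot x * diracBeta = -(diracBeta * alphaDot x) := by
  rw [beta_eq, alphaDot_eq]
  ext i j; fin_cases i <;> fin_cases j <;>
    simp [Matrix.mul_apply, Fin.sum_univ_four, Matrix.vecHead, Matrix.vecTail] <;> try ring_nf <;> try simp [Complex.I_sq] <;> try ring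

set_option maxHeartbeats 1600000 in
lemma sDot_anticomm (u x : Fin 3 → ℝ)
    (h : u 0 * x 0 + u 1 * x 1 + u 2 * x 2 = 0) :
    sDot u * (diracBeta * alphaDot x) =
      -((diracBeta * alphaDot x) * sDot u) := by
  have hc : (u 0 : ℂ) * x 0 + (u 1 : ℂ) * x 1 + (u 2 : ℂ) * x 2 = 0 := by
    exact_mod_cast congrArg (Complex.ofReal) h
  rw [sDot_eq, BA_eq]
  ext i j; fin_cases i <;> fin_cases j <;>
    simp [Matrix.mul_apply, Fin.sum_univ_four, Matrix.vecHead, Matrix.vecTail] <;>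
    (try ring_nf) <;> (try simp only [Complex.I_sq]) <;>
    first
      | ring1
      | linear_combination (2:ℂ) * hc
      | linear_combination (-2:ℂ) * hc
      | linear_combination (2*Complex.I) * hc
      | linear_combination (-2*Complex.I) * hc

lemma cross3_inner (x y : Fin 3 → ℝ) :
    cross3 x y 0 * x 0 + cross3 x y 1 * x 1 + cross3 x y 2 * x 2 = 0 := by
  simp [cross3]; ring

-- STATEMENT 13
theorem stmt13 (ν ξ : Fin 3 → ℝ) (s : ℝ) (hν : norm3 ν = 1) (hs : 0 < s) (t : ℂ) :
    NormedSpace.exp (t • L0 ν ξ s) =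
      Complex.exp (t * rhoM ν ξ s) • Piminus ν ξ
        + Complex.exp (t * rhoP ν ξ s) • Piplus ν ξ := by
  letI : SeminormedRing (Matrix (Fin 4) (Fin 4) ℂ) := Matrix.linftyOpSemiNormedRing
  letI : NormedRing (Matrix (Fin 4) (Fin 4) ℂ) := Matrix.linftyOpNormedRing
  letI : NormedAlgebra ℂ (Matrix (Fin 4) (Fin 4) ℂ) := Matrix.linftyOpNormedAlgebra
  -- scalar facts
  have hττ : (0:ℝ) ≤ inner3 (cross3 ν ξ) (cross3 ν ξ) := by
    simp only [inner3]
    nlinarith [mul_self_nonneg (cross3 ν ξ 0), mul_self_nonneg (cross3 ν ξ 1),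
      mul_self_nonneg (cross3 ν ξ 2)]
  have hνν0 : (0:ℝ) ≤ inner3 ν ν := by
    simp only [inner3]
    nlinarith [mul_self_nonneg (ν 0), mul_self_nonneg (ν 1), mul_self_nonneg (ν 2)]
  have hνν : inner3 ν ν = 1 := by
    have h := Real.sq_sqrt hνν0
    rw [norm3] at hν; rw [hν] at h; simpa using h.symm
  have hlam_pos : 0 < lam ν ξ := Real.sqrt_pos.2 (by linarith)
  have hlam_sq : lam ν ξ ^ 2 = inner3 (cross3 ν ξ) (cross3 ν ξ) + 1 :=
    Real.sq_sqrt (by linarith)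
  have hlc0 : ((lam ν ξ : ℝ) : ℂ) ≠ 0 := Complex.ofReal_ne_zero.2 hlam_pos.ne'
  have hs0 : ((s : ℝ) : ℂ) ≠ 0 := Complex.ofReal_ne_zero.2 hs.ne'
  have hlcsq : ((lam ν ξ : ℝ) : ℂ) ^ 2 = ((inner3 (cross3 ν ξ) (cross3 ν ξ) : ℝ) : ℂ) + 1 := by
    exact_mod_cast congrArg Complex.ofReal hlam_sq
  -- matrix facts
  set K : Matrix (Fin 4) (Fin 4) ℂ := diracBeta * alphaDot ν with hK
  have hKK : K * K = -(1 : Matrix (Fin 4) (Fin 4) ℂ) := by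
    have h1 : K * K = diracBeta * (alphaDot ν * diracBeta) * alphaDot ν := by
      rw [hK]; noncomm_ring
    rw [h1, alpha_mul_beta]
    have h2 : diracBeta * -(diracBeta * alphaDot ν) * alphaDot ν
        = -((diracBeta * diracBeta) * (alphaDot ν * alphaDot ν)) := by noncomm_ring
    rw [h2, beta_mul_beta, alpha_mul_self, hνν]
    simp
  have hanti : sDot (cross3 ν ξ) * K = -(K * sDot (cross3 ν ξ)) :=
    sDot_anticomm (cross3 ν ξ) ν (cross3_inner ν ξ)
  set M : Matrix (Fin 4) (Fin 4) ℂ :=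
    sDot (cross3 ν ξ) - Complex.I • K with hM
  have hMM : M * M
      = (((inner3 (cross3 ν ξ) (cross3 ν ξ) : ℝ) : ℂ) + 1) • (1 : Matrix (Fin 4) (Fin 4) ℂ) := by
    rw [hM]
    simp only [sub_mul, mul_sub, smul_mul_assoc, mul_smul_comm, smul_smul]
    rw [hanti, hKK, sDot_mul_self]
    simp only [smul_neg, smul_smul, Complex.I_mul_I, smul_sub, neg_one_smul, sub_neg_eq_add]
    match_scalars <;>
      first
        | ring1
        | linear_combination (-1 : ℂ) * Complex.I_sq
        | linear_combination Complex.I_sq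
  set N : Matrix (Fin 4) (Fin 4) ℂ := ((lam ν ξ : ℝ) : ℂ)⁻¹ • M with hN
  have hNN : N * N = 1 := by
    rw [hN, smul_mul_assoc, mul_smul_comm, smul_smul, hMM, smul_smul, ← hlcsq]
    have hone : ((lam ν ξ : ℝ):ℂ)⁻¹ * ((lam ν ξ : ℝ):ℂ)⁻¹ * ((lam ν ξ : ℝ):ℂ)^2 = 1 := by
      field_simp
    rw [hone, one_smul]
  set Q : Matrix (Fin 4) (Fin 4) ℂ := Piminus ν ξ with hQs
  set P : Matrix (Fin 4) (Fin 4) ℂ := Piplus ν ξ with hPs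
  have hQdef : Q = ((1:ℂ)/2) • (1 - N) := by rw [hQs, Piminus, hN, hM]
  have hPdef : P = ((1:ℂ)/2) • (1 + N) := by rw [hPs, Piplus, hN, hM]
  have hQQ : Q * Q = Q := by
    rw [hQdef]
    simp only [smul_mul_assoc, mul_smul_comm, sub_mul, mul_sub, one_mul, mul_one, hNN, smul_smul]
    module
  have hPP : P * P = P := by
    rw [hPdef]
    simp only [smul_mul_assoc, mul_smul_comm, add_mul, mul_add, one_mul, mul_one, hNN, smul_smul]
    module
  have hQP : Q * P = 0 := by
    rw [hQdef, hPdef]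
    simp only [smul_mul_assoc, mul_smul_comm, add_mul, mul_add, sub_mul, mul_sub,
      one_mul, mul_one, hNN, smul_smul]
    module
  have hPQ : P * Q = 0 := by
    rw [hQdef, hPdef]
    simp only [smul_mul_assoc, mul_smul_comm, add_mul, mul_add, sub_mul, mul_sub,
      one_mul, mul_one, hNN, smul_smul]
    module
  have hsum : Q + P = 1 := by
    rw [hQdef, hPdef]; module
  -- the ring homomorphism
  let f : ℂ × ℂ →+* Matrix (Fin 4) (Fin 4) ℂ :=
    { toFun := fun p => p.1 • Q + p.2 • P
      map_one' := by simpa using hsum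
      map_mul' := fun p q => by
        show (p.1 * q.1) • Q + (p.2 * q.2) • P
            = (p.1 • Q + p.2 • P) * (q.1 • Q + q.2 • P)
        simp only [add_mul, mul_add, smul_mul_assoc, mul_smul_comm, smul_smul,
          hQQ, hPP, hQP, hPQ, smul_zero, add_zero, zero_add]
        rw [mul_comm q.1 p.1, mul_comm q.2 p.2]
      map_zero' := by simp
      map_add' := fun p q => by
        show (p.1 + q.1) • Q + (p.2 + q.2) • P = _
        simp only [add_smul]; abel }
  have hf : Continuous f := by
    show Continuous fun p : ℂ × ℂ => p.1 • Q + p.2 • P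
    exact (continuous_fst.smul continuous_const).add (continuous_snd.smul continuous_const)
  -- key L0 decomposition
  have hkey : (Complex.I • alphaDot ν) * (alphaDot ξ + diracBeta)
      = (Complex.I * ((inner3 ν ξ : ℝ) : ℂ)) • 1 + M := by
    rw [smul_mul_assoc, mul_add, alpha_mul_alpha, alpha_mul_beta, hM, hK]
    simp only [smul_sub, smul_add, smul_smul, smul_neg, Complex.I_mul_I, neg_one_smul]
    module
  have hL : t • L0 ν ξ s = f (t * rhoM ν ξ s, t * rhoP ν ξ s) := by
    show t • L0 ν ξ s = (t * rhoM ν ξ s) • Q + (t * rhoP ν ξ s) • P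
    rw [L0, hkey, hQdef, hPdef, rhoM, rhoP, hN]
    match_scalars <;> field_simp <;> ring
  have hexp : NormedSpace.exp ((t * rhoM ν ξ s, t * rhoP ν ξ s) : ℂ × ℂ)
      = (Complex.exp (t * rhoM ν ξ s), Complex.exp (t * rhoP ν ξ s)) := by
    have h1 := Prod.fst_exp ((t * rhoM ν ξ s, t * rhoP ν ξ s) : ℂ × ℂ)
    have h2 := Prod.snd_exp ((t * rhoM ν ξ s, t * rhoP ν ξ s) : ℂ × ℂ)
    rw [Complex.exp_eq_exp_ℂ]
    exact Prod.ext h1 h2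
  calc NormedSpace.exp (t • L0 ν ξ s)
      = NormedSpace.exp (f (t * rhoM ν ξ s, t * rhoP ν ξ s)) := by rw [hL]
    _ = f (NormedSpace.exp ((t * rhoM ν ξ s, t * rhoP ν ξ s) : ℂ × ℂ)) :=
        (NormedSpace.map_exp f hf _).symm
    _ = f (Complex.exp (t * rhoM ν ξ s), Complex.exp (t * rhoP ν ξ s)) := by rw [hexp]
    _ = Complex.exp (t * rhoM ν ξ s) • Q + Complex.exp (t * rhoP ν ξ s) • P := rfl

end
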